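/- arXiv:2308.07782 — 3 statements merged into one kernel-verified Lean document; each statement's English description precedes it below -/
import Mathlib

section
/- Let G be a group, f : G → G a group automorphism, and equip G with the operation x ∗ y := f(x y⁻¹) · y. Then for every positive integer j, the following are equivalent: (S_y^j(x) = x for all x, y ∈ G) and (f^j is the identity automorphism of G), where S_y(x) = x ∗ y. -/
lemma galex_iter {G : Type*} [Group G] (f : MulAut G) (n : ℕ) (x y : G) :
    (fun x : G => f (x * y⁻¹) * y)^[n] x = (f ^ n) (x * y⁻¹) * y := by
  induction n with
  | zero => simp
  | succ n ih =>
      rw [Function.iterate_succ_apply', ih, pow_succ']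
      simp [mul_assoc]

/-- For `GAlex(G, f)` with operation `x ∗ y := f (x * y⁻¹) * y` and any positive
integer `j`: `S_y^j (x) = x` for all `x, y ∈ G` iff `f^j` is the identity automorphism. -/
theorem galex_iterate_eq_self_iff {G : Type*} [Group G] (f : MulAut G) (j : ℕ)
    (hj : 0 < j) :
    (∀ x y : G, (fun x : G => f (x * y⁻¹) * y)^[j] x = x) ↔ f ^ j = 1 := by
  constructor
  · intro h
    ext g
    have := h g 1
    rw [galex_iter] at this
    simpa using this
  · intro h x y
    rw [galex_iter, h]
    simp
end

section
/- Let G be a group and f : G → G a group automorphism of finite order, and equip G with the operation x ∗ y := f(x y⁻¹) · y. Then the least positive integer n such that S_y^n(x) = x for all x, y ∈ G exists and equals the order of f; that is, the type of the generalized Alexander quandle GAlex(G, f) equals order(f). -/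
lemma galex_iterate {G : Type*} [Group G] (f : MulAut G) (y : G) (n : ℕ) (x : G) :
    (fun x : G => f (x * y⁻¹) * y)^[n] x = (f ^ n) (x * y⁻¹) * y := by
  induction n with
  | zero => simp
  | succ n ih =>
    rw [Function.iterate_succ_apply', ih, pow_succ']
    simp

/-- If `f` is a group automorphism of finite order, then the least positive integer `n`
with `S_y^n (x) = x` for all `x, y ∈ G` (where `x ∗ y := f (x * y⁻¹) * y`) exists and
equals the order of `f`; i.e. the type of `GAlex(G, f)` equals `order f`. -/
theorem type_galex_eq_orderOf {G : Type*} [Group G] (f : MulAut G)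
    (hf : IsOfFinOrder f) :
    IsLeast {n : ℕ | 0 < n ∧ ∀ x y : G, (fun x : G => f (x * y⁻¹) * y)^[n] x = x}
      (orderOf f) := by
  constructor
  · refine ⟨hf.orderOf_pos, fun x y => ?_⟩
    rw [galex_iterate, pow_orderOf_eq_one]
    simp
  · rintro n ⟨hn, h⟩
    have hpow : f ^ n = 1 := by
      ext x
      have := h x 1
      rw [galex_iterate] at this
      simpa using this
    exact Nat.le_of_dvd hn (orderOf_dvd_of_pow_eq_one hpow)
end

section
/- Let G and H be groups with group automorphisms f : G → G and g : H → H, and equip G and H with the operations x ∗ y := f(x y⁻¹) · y and u ∗ v := g(u v⁻¹) · v, respectively. If there exists a bijection φ : G → H with φ(x ∗ y) = φ(x) ∗ φ(y) for all x, y ∈ G (i.e., the generalized Alexander quandles GAlex(G, f) and GAlex(H, g) are quandle isomorphic), then for every positive integer n, f^n = id if and only if g^n = id; in particular, f and g have the same order. -/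
/-- If the generalized Alexander quandles `GAlex(G, f)` and `GAlex(H, g)` (with
operations `x ∗ y := f (x * y⁻¹) * y` and `u ∗ v := g (u * v⁻¹) * v`) are quandle
isomorphic, then for every positive integer `n`, `f^n = id` iff `g^n = id`; in
particular `f` and `g` have the same order (with order `0` when infinite). -/
theorem galex_iso_orderOf_eq {G H : Type*} [Group G] [Group H]
    (f : MulAut G) (g : MulAut H) (φ : G → H) (hφ : Function.Bijective φ)
    (hhom : ∀ x y : G, φ (f (x * y⁻¹) * y) = g (φ x * (φ y)⁻¹) * φ y) :
    (∀ n : ℕ, 0 < n → (f ^ n = 1 ↔ g ^ n = 1)) ∧ orderOf f = orderOf g := by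
  have key : ∀ n : ℕ, ∀ x y : G,
      φ ((f ^ n) (x * y⁻¹) * y) = (g ^ n) (φ x * (φ y)⁻¹) * φ y := by
    intro n
    induction n with
    | zero => intro x y; simp
    | succ n ih =>
      intro x y
      have h1 := hhom ((f ^ n) (x * y⁻¹) * y) y
      rw [mul_inv_cancel_right, ih, mul_inv_cancel_right] at h1
      rw [pow_succ', pow_succ']
      simpa using h1
  have iff_all : ∀ n : ℕ, f ^ n = 1 ↔ g ^ n = 1 := by
    intro n
    constructor
    · intro hf
      ext w
      obtain ⟨x, hx⟩ := hφ.2 (w * φ 1)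
      have h := key n x 1
      rw [hf] at h
      simp only [MulAut.one_apply, inv_one, mul_one] at h
      rw [hx, mul_inv_cancel_right] at h
      rw [MulAut.one_apply]
      exact mul_right_cancel h.symm
    · intro hg
      ext w
      have h := key n w 1
      rw [hg] at h
      simp only [MulAut.one_apply, inv_one, mul_one, inv_mul_cancel_right] at h
      rw [MulAut.one_apply]
      exact hφ.1 h
  refine ⟨fun n _ => iff_all n, ?_⟩
  rw [orderOf_eq_orderOf_iff]
  exact iff_all
end
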